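/- arXiv:2311.11983 — 3 statements merged into one kernel-verified Lean document; each statement's English description precedes it below -/
import Mathlib

section
/- For all n ≥ 1 and i_0, ..., i_n ≥ 0, the boundary of the representable (n+1)-fold simplicial set Δ[i_n, ..., i_0] decomposes as a pushout: ∂Δ[i_n,...,i_0] ≅ (Δ[i_n,...,i_1,0] × ∂F(i_0)) ⊔_{∂Δ[i_n,...,i_1,0] × ∂F(i_0)} (∂Δ[i_n,...,i_1,0] × F(i_0)), where F(i_0) denotes the presheaf on Δ^{n+1} depending only on the last coordinate via Δ[i_0], and ∂ denotes removing the top cell. Equivalently: a map ([j_n],...,[j_0]) → ([i_n],...,[i_0]) in Δ^{n+1} lies in the boundary if and only if not all of its coordinate maps are surjections. -/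
/-!
STATEMENT 0: For `n ≥ 1` and a multi-index `([i_n],...,[i_0])`, the boundary
`∂Δ[i_n,...,i_0]` of the representable presheaf on `Δ^{n+1}` — i.e. the maximal
subpresheaf not containing the identity — consists exactly of those maps
`([j_n],...,[j_0]) → ([i_n],...,[i_0])` for which not all coordinate maps are
surjections.  (This is the decomposition statement in its equivalent elementwise
form, as stated in the paper.)

We encode "`f` lies in the maximal subpresheaf missing the identity" as
"`f` lies in *some* subpresheaf missing the identity" (the maximal one being the
union of all of these).
-/

open CategoryTheory Opposite

/-- A subpresheaf of a presheaf of types. -/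
structure MultiSub {C : Type*} [Category C] (F : Cᵒᵖ ⥤ Type*) where
  carrier : ∀ c : Cᵒᵖ, Set (F.obj c)
  map_mem : ∀ {c c' : Cᵒᵖ} (g : c ⟶ c') {x : F.obj c}, x ∈ carrier c → F.map g x ∈ carrier c'

theorem statement0 (n : ℕ) (hn : 1 ≤ n) (I : Fin (n + 1) → SimplexCategory)
    (J : Fin (n + 1) → SimplexCategory) (f : J ⟶ I) :
    (∃ G : MultiSub (yoneda.obj I),
        𝟙 I ∉ G.carrier (op I) ∧ f ∈ G.carrier (op J)) ↔
      ¬ ∀ h : Fin (n + 1), Function.Surjective (f h).toOrderHom := by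
  constructor
  · rintro ⟨G, hid, hf⟩ hsurj
    have hepi : ∀ h, IsSplitEpi (f h) := fun h => by
      have : Epi (f h) := SimplexCategory.epi_iff_surjective.2 (hsurj h)
      exact isSplitEpi_of_epi (f h)
    let s : I ⟶ J := fun h => (hepi h).exists_splitEpi.some.section_
    have hs : s ≫ f = 𝟙 I := by
      funext h
      exact (hepi h).exists_splitEpi.some.id
    have := G.map_mem (c := op J) (c' := op I) (op s) hf
    rw [show (yoneda.obj I).map (op s) f = s ≫ f from rfl, hs] at this
    exact hid this
  · intro hns
    push_neg at hns
    obtain ⟨h₀, hh₀⟩ := hns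
    refine ⟨⟨fun c x => ¬ Function.Surjective (x h₀).toOrderHom, ?_⟩, ?_, hh₀⟩
    · intro c c' g x hx hsurj
      apply hx
      have : (((yoneda.obj I).map g x) h₀ : c'.unop h₀ ⟶ I h₀) = g.unop h₀ ≫ x h₀ := rfl
      rw [this] at hsurj
      exact Function.Surjective.of_comp hsurj
    · change ¬ ¬ Function.Surjective ((𝟙 I : I ⟶ I) h₀).toOrderHom
      intro hcon
      exact hcon (fun y => ⟨y, rfl⟩)
end

section
/- There is a natural isomorphism of functors Top → Cat between h_1 ∘ Sing_sS and the fundamental groupoid functor Π_1. Concretely, for a topological space X, the category with objects the points of X, morphisms x → y the path components of the space of paths from x to y (with endpoints fixed), and composition induced by the Segal structure of Sing_sS(X), is naturally isomorphic to the fundamental groupoid of X. -/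
/-!
STATEMENT 10: There is a natural isomorphism `h₁ ∘ Sing_sS ≅ Π₁` between the
homotopy category of the Segal space `Sing_sS(X)` and the fundamental groupoid
of `X`, natural in the topological space `X`.  Concretely: objects of
`h₁(Sing_sS X)` correspond bijectively to points of `X`; hom-sets (path
components of the mapping spaces, i.e. `Quot` of the edge-homotopy relation)
correspond bijectively to endpoint-preserving homotopy classes of paths; and
these bijections send Segal composites to path composition, degenerate edges to
identities, and are natural with respect to continuous maps.
-/

open CategoryTheory Limits Opposite Simplicial

noncomputable section

/-! ### Weak homotopy equivalences of simplicial sets -/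

/-- The unique map to the point `Δ[0]`. -/
def toPoint (X : SSet) : X ⟶ Δ[0] where
  app m := ↾fun _ => ULift.up (SimplexCategory.Hom.mk ⟨fun _ => 0, monotone_const⟩)
  naturality := by
    intro a b g
    ext x
    apply congrArg ULift.up
    apply SimplexCategory.Hom.ext
    apply OrderHom.ext
    funext v
    apply Subsingleton.elim (α := Fin 1)

/-- The two endpoints `Δ[0] ⟶ Δ[1]`. -/
def pt0 : Δ[0] ⟶ Δ[1] := SSet.stdSimplex.map (SimplexCategory.δ 1)
def pt1 : Δ[0] ⟶ Δ[1] := SSet.stdSimplex.map (SimplexCategory.δ 0)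

/-- Simplicial homotopy of maps `X ⟶ Z`, via the cylinder `X ⨯ Δ[1]`. -/
def SHtpy {X Z : SSet} (f g : X ⟶ Z) : Prop :=
  ∃ H : (X ⨯ Δ[1] : SSet) ⟶ Z,
    prod.lift (𝟙 X) (toPoint X ≫ pt0) ≫ H = f ∧
    prod.lift (𝟙 X) (toPoint X ≫ pt1) ≫ H = g

/-- The horn-filling condition defining Kan complexes in the older Mathlib
(`SSet.KanComplex`), for every `n : ℕ` (including `n = 0`). -/
def KanComplexOld (S : SSet) : Prop :=
  ∀ ⦃n : ℕ⦄ ⦃i : Fin (n + 1)⦄ (σ₀ : (Λ[n, i] : SSet) ⟶ S),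
    ∃ σ : Δ[n] ⟶ S, σ₀ = Λ[n, i].ι ≫ σ

/-- A map of simplicial sets is a weak homotopy equivalence iff for every Kan
complex `Z` it induces a bijection on homotopy classes of maps into `Z`. -/
def IsWeakEquiv {X Y : SSet} (f : X ⟶ Y) : Prop :=
  ∀ Z : SSet, KanComplexOld Z →
    (∀ u : X ⟶ Z, ∃ v : Y ⟶ Z, SHtpy (f ≫ v) u) ∧
    (∀ v w : Y ⟶ Z, SHtpy (f ≫ v) (f ≫ w) → SHtpy v w)

/-- A trivial fibration of simplicial sets: right lifting property against all
(levelwise) monomorphisms. -/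
def IsTrivialFibration {X Y : SSet} (p : X ⟶ Y) : Prop :=
  ∀ ⦃A B : SSet⦄ (j : A ⟶ B), (∀ m, Function.Injective (j.app m)) → HasLiftingProperty j p

/-! ### Simplicial spaces and the injective (Reedy) model structure -/

/-- Simplicial spaces. -/
abbrev SimpSpace := SimplexCategoryᵒᵖ ⥤ SSet

/-- Levelwise cofibrations (monomorphisms) of simplicial spaces. -/
def LwMono {X Y : SimpSpace} (f : X ⟶ Y) : Prop :=
  ∀ d m, Function.Injective ((f.app d).app m)

/-- Levelwise weak equivalences of simplicial spaces. -/
def LwWeq {X Y : SimpSpace} (f : X ⟶ Y) : Prop :=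
  ∀ d, IsWeakEquiv (f.app d)

/-- Reedy (injective) fibrations of simplicial spaces: right lifting property
against all trivial cofibrations, i.e. levelwise monos which are levelwise weak
equivalences. -/
def ReedyFibration {X Y : SimpSpace} (f : X ⟶ Y) : Prop :=
  ∀ ⦃U V : SimpSpace⦄ (j : U ⟶ V), LwMono j → LwWeq j → HasLiftingProperty j f

/-- Trivial Reedy fibrations: right lifting property against all cofibrations. -/
def TrivialReedyFibration {X Y : SimpSpace} (f : X ⟶ Y) : Prop :=
  ∀ ⦃U V : SimpSpace⦄ (j : U ⟶ V), LwMono j → HasLiftingProperty j f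

/-- Reedy fibrant simplicial spaces. -/
def ReedyFibrant (X : SimpSpace) : Prop :=
  ReedyFibration (terminal.from X)

/-! ### Segal spaces -/

/-- Source vertex map `X₁ ⟶ X₀` (restriction along `⟨0⟩ = δ¹ : [0] → [1]`). -/
def srcM (X : SimpSpace) : X.obj (op ⦋1⦌) ⟶ X.obj (op ⦋0⦌) :=
  X.map (SimplexCategory.δ 1).op

/-- Target vertex map `X₁ ⟶ X₀` (restriction along `⟨1⟩ = δ⁰ : [0] → [1]`). -/
def tgtM (X : SimpSpace) : X.obj (op ⦋1⦌) ⟶ X.obj (op ⦋0⦌) :=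
  X.map (SimplexCategory.δ 0).op

/-- The `i`-th edge `[1] ⟶ [n]`, `j ↦ i + j`. -/
def edgeHom (n : ℕ) (i : Fin n) : (⦋1⦌ : SimplexCategory) ⟶ ⦋n⦌ :=
  SimplexCategory.mkHom
    ⟨fun j => ⟨i.1 + j.1, by have hi := i.2; have hj := j.2; omega⟩, by
      intro a b hab
      have : a.1 ≤ b.1 := hab
      simp only [Fin.mk_le_mk]
      omega⟩

/-- The (iterated homotopy) fiber product `X₁ ×_{X₀} ⋯ ×_{X₀} X₁` of `n` copies
of `X₁`, the codomain of the `n`-th Segal map. -/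
def SpineLim (X : SimpSpace) (n : ℕ) : SSet where
  obj m :=
    { f : Fin n → (X.obj (op ⦋1⦌)).obj m //
      ∀ (i : ℕ) (h1 : i + 1 < n),
        (tgtM X).app m (f ⟨i, by omega⟩) = (srcM X).app m (f ⟨i + 1, h1⟩) }
  map {m m'} g := ↾fun p =>
    ⟨fun i => (X.obj (op ⦋1⦌)).map g (p.1 i), by
      intro i h1
      have h := p.2 i h1
      have ht := ConcreteCategory.congr_hom ((tgtM X).naturality g) (p.1 ⟨i, by omega⟩)
      have hs := ConcreteCategory.congr_hom ((srcM X).naturality g) (p.1 ⟨i + 1, h1⟩)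
      simp only [types_comp_apply] at ht hs
      dsimp only
      rw [ht, h, ← hs]⟩
  map_id := by
    intro m
    refine ConcreteCategory.ext_apply fun p => ?_
    apply Subtype.ext
    funext i
    simp
  map_comp := by
    intro m m' m'' g h
    refine ConcreteCategory.ext_apply fun p => ?_
    apply Subtype.ext
    funext i
    simp

/-- The `n`-th Segal map `X_n ⟶ X₁ ×_{X₀} ⋯ ×_{X₀} X₁`. -/
def segalMap (X : SimpSpace) (n : ℕ) : X.obj (op ⦋n⦌) ⟶ SpineLim X n where
  app m := ↾fun x =>
    ⟨fun i => (X.map (edgeHom n i).op).app m x, by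
      intro i h1
      have key : (SimplexCategory.δ 0 ≫ edgeHom n ⟨i, by omega⟩ : (⦋0⦌ : SimplexCategory) ⟶ ⦋n⦌) =
          SimplexCategory.δ 1 ≫ edgeHom n ⟨i + 1, h1⟩ := by
        apply SimplexCategory.Hom.ext
        apply OrderHom.ext
        funext v
        have hv : v = 0 := Subsingleton.elim (α := Fin 1) v 0
        subst hv
        apply Fin.ext
        simp [edgeHom, SimplexCategory.δ, Fin.succAbove]
        rfl
      have e1 : (tgtM X).app m ((X.map (edgeHom n ⟨i, by omega⟩).op).app m x) =
          (X.map (SimplexCategory.δ 0 ≫ edgeHom n ⟨i, by omega⟩).op).app m x := by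
        rw [op_comp, X.map_comp]; rfl
      have e2 : (srcM X).app m ((X.map (edgeHom n ⟨i + 1, h1⟩).op).app m x) =
          (X.map (SimplexCategory.δ 1 ≫ edgeHom n ⟨i + 1, h1⟩).op).app m x := by
        rw [op_comp, X.map_comp]; rfl
      rw [e1, e2, key]⟩
  naturality := by
    intro m m' g
    refine ConcreteCategory.ext_apply fun x => ?_
    apply Subtype.ext
    funext i
    exact ConcreteCategory.congr_hom ((X.map (edgeHom n i).op).naturality g) x

/-- A Segal space: a Reedy fibrant simplicial space whose Segal maps are weak
equivalences. -/
def IsSegalSpace (X : SimpSpace) : Prop :=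
  ReedyFibrant X ∧ ∀ n, 2 ≤ n → IsWeakEquiv (segalMap X n)


/-! ### Mapping spaces (fibers), path components, composites -/

/-- The set of objects (vertices) of a simplicial space. -/
abbrev Vtx (X : SimpSpace) := (X.obj (op ⦋0⦌)).obj (op ⦋0⦌)

/-- The set of `1`-morphism vertices of a simplicial space. -/
abbrev EdgeVtx (X : SimpSpace) := (X.obj (op ⦋1⦌)).obj (op ⦋0⦌)

/-- Any two maps into `[0]` agree. -/
lemma toZeroUnique {a : SimplexCategory} (f g : a ⟶ ⦋0⦌) : f = g := by
  apply SimplexCategory.Hom.ext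
  apply OrderHom.ext
  funext v
  exact Subsingleton.elim (α := Fin 1) _ _

/-- The unique map `m ⟶ [0]`. -/
def toZero (a : SimplexCategory) : a ⟶ ⦋0⦌ :=
  SimplexCategory.Hom.mk ⟨fun _ => 0, monotone_const⟩

/-- The constant extension of a vertex `x ∈ X₀` to an arbitrary level `m`. -/
def cstAt (X : SimpSpace) (x : Vtx X) (m : SimplexCategoryᵒᵖ) : (X.obj (op ⦋0⦌)).obj m :=
  (X.obj (op ⦋0⦌)).map (toZero m.unop).op x

lemma cst_natural (X : SimpSpace) (x : Vtx X) {m m' : SimplexCategoryᵒᵖ} (g : m ⟶ m') :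
    (X.obj (op ⦋0⦌)).map g (cstAt X x m) = cstAt X x m' := by
  dsimp [cstAt]
  rw [← FunctorToTypes.map_comp_apply]
  have he : (toZero m.unop).op ≫ g = (toZero m'.unop).op := by
    rw [show (toZero m.unop).op ≫ g = (g.unop ≫ toZero m.unop).op from rfl]
    exact congrArg Quiver.Hom.op (toZeroUnique _ _)
  rw [he]

/-- Source object of a `1`-morphism vertex. -/
def vsrc (X : SimpSpace) (f : EdgeVtx X) : Vtx X := (srcM X).app (op ⦋0⦌) f

/-- Target object of a `1`-morphism vertex. -/
def vtgt (X : SimpSpace) (f : EdgeVtx X) : Vtx X := (tgtM X).app (op ⦋0⦌) f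

/-- The mapping space `X(x,y)`: the fiber of `(source, target) : X₁ → X₀ × X₀`
over the pair of vertices `(x, y)`. -/
def mapFiber (X : SimpSpace) (x y : Vtx X) : SSet where
  obj m :=
    { a : (X.obj (op ⦋1⦌)).obj m //
      (srcM X).app m a = cstAt X x m ∧ (tgtM X).app m a = cstAt X y m }
  map {m m'} g := ↾fun p =>
    ⟨(X.obj (op ⦋1⦌)).map g p.1, by
      have hs := ConcreteCategory.congr_hom ((srcM X).naturality g) p.1
      have ht := ConcreteCategory.congr_hom ((tgtM X).naturality g) p.1
      simp only [types_comp_apply] at hs ht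
      constructor
      · rw [hs, p.2.1, cst_natural]
      · rw [ht, p.2.2, cst_natural]⟩
  map_id := by
    intro m
    refine ConcreteCategory.ext_apply fun p => ?_
    apply Subtype.ext
    simp
  map_comp := by
    intro m m' m'' g h
    refine ConcreteCategory.ext_apply fun p => ?_
    apply Subtype.ext
    simp

/-- Two parallel `1`-morphism vertices (from `x` to `y`) are homotopic if there
is an edge in the mapping space `X(x,y)` connecting them: an element of
`X₁` at inner level `[1]` whose inner faces are `f`, `f'` and which is constant
at `x`, `y` on source and target. -/
def PathRel (X : SimpSpace) (x y : Vtx X) (f f' : EdgeVtx X) : Prop :=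
  ∃ e : (X.obj (op ⦋1⦌)).obj (op ⦋1⦌),
    (X.obj (op ⦋1⦌)).map (SimplexCategory.δ 1).op e = f ∧
    (X.obj (op ⦋1⦌)).map (SimplexCategory.δ 0).op e = f' ∧
    (srcM X).app (op ⦋1⦌) e = cstAt X x (op ⦋1⦌) ∧
    (tgtM X).app (op ⦋1⦌) e = cstAt X y (op ⦋1⦌)

/-- `h` is a composite of `f` followed by `g`, as witnessed by a `2`-simplex
with faces `d₂ = f`, `d₀ = g`, `d₁ = h`. -/
def IsComposite (X : SimpSpace) (f g h : EdgeVtx X) : Prop :=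
  ∃ σ : (X.obj (op ⦋2⦌)).obj (op ⦋0⦌),
    (X.map (SimplexCategory.δ 2).op).app (op ⦋0⦌) σ = f ∧
    (X.map (SimplexCategory.δ 0).op).app (op ⦋0⦌) σ = g ∧
    (X.map (SimplexCategory.δ 1).op).app (op ⦋0⦌) σ = h

/-- The degenerate (identity) edge at a vertex. -/
def idEdge (X : SimpSpace) (x : Vtx X) : EdgeVtx X :=
  (X.map (SimplexCategory.σ 0).op).app (op ⦋0⦌) x

/-- Precomposition `X^{Δ_t[n]} → X^{Δ_t[n']}` along the topological cosimplicial
structure maps. -/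
def preMap (X : TopCat) {n n' : SimplexCategoryᵒᵖ} (g : n ⟶ n') :
    TopCat.of C(SimplexCategory.toTop.{0}.obj n.unop, X) ⟶
      TopCat.of C(SimplexCategory.toTop.{0}.obj n'.unop, X) :=
  TopCat.ofHom ⟨fun (φ : C(SimplexCategory.toTop.{0}.obj n.unop, X)) => φ.comp (SimplexCategory.toTop.{0}.map g.unop).hom,
    ContinuousMap.continuous_precomp _⟩

lemma preMap_id (X : TopCat) (n : SimplexCategoryᵒᵖ) :
    preMap X (𝟙 n) = 𝟙 (TopCat.of C(SimplexCategory.toTop.{0}.obj n.unop, X)) :=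
  TopCat.ext fun φ => by
    change φ.comp (SimplexCategory.toTop.{0}.map (𝟙 n.unop)).hom = φ
    rw [CategoryTheory.Functor.map_id]
    rfl

lemma preMap_comp (X : TopCat) {n n' n'' : SimplexCategoryᵒᵖ} (g : n ⟶ n') (h : n' ⟶ n'') :
    preMap X (g ≫ h) = preMap X g ≫ preMap X h :=
  TopCat.ext fun φ => by
    change φ.comp (SimplexCategory.toTop.{0}.map (h.unop ≫ g.unop)).hom = _
    rw [CategoryTheory.Functor.map_comp]
    rfl

/-- The simplicial space `Sing_sS(X)` with `Sing_sS(X)_n = Sing(X^{Δ_t[n]})`. -/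
def SingSS (X : TopCat) : SimpSpace where
  obj n := TopCat.toSSet.obj (TopCat.of C(SimplexCategory.toTop.{0}.obj n.unop, X))
  map {n n'} g := TopCat.toSSet.map (preMap X g)
  map_id := by
    intro n
    show TopCat.toSSet.map (preMap X (𝟙 n)) = _
    rw [preMap_id, TopCat.toSSet.map_id]
  map_comp := by
    intro n n' n'' g h
    show TopCat.toSSet.map (preMap X (g ≫ h)) = _
    rw [preMap_comp, TopCat.toSSet.map_comp]

/-- Postcomposition with `F : X ⟶ Y` on mapping spaces. -/
def postMap (X Y : TopCat) (F : X ⟶ Y) (n : SimplexCategoryᵒᵖ) :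
    TopCat.of C(SimplexCategory.toTop.{0}.obj n.unop, X) ⟶
      TopCat.of C(SimplexCategory.toTop.{0}.obj n.unop, Y) :=
  TopCat.ofHom ⟨fun φ => ContinuousMap.comp F.hom φ, ContinuousMap.continuous_postcomp _⟩

/-- The functorial action of `Sing_sS` on a continuous map. -/
def SingSSmap {X Y : TopCat} (F : X ⟶ Y) : SingSS X ⟶ SingSS Y where
  app n := TopCat.toSSet.map (postMap X Y F n)
  naturality := by
    intro n n' g
    show TopCat.toSSet.map (preMap X g) ≫ TopCat.toSSet.map (postMap X Y F n') =
      TopCat.toSSet.map (postMap X Y F n) ≫ TopCat.toSSet.map (preMap Y g)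
    rw [← TopCat.toSSet.map_comp, ← TopCat.toSSet.map_comp]
    congr 1

/-- The vertex of `Sing_sS(X)` corresponding to a point of `X`. -/
def pointVtx (X : TopCat) (x : X) : Vtx (SingSS X) :=
  ULift.up (TopCat.ofHom (⟨fun _ => ⟨fun _ => x, continuous_const⟩, continuous_const⟩ :
    C(SimplexCategory.toTop.{0}.obj (SimplexCategory.mk 0),
      C(SimplexCategory.toTop.{0}.obj (SimplexCategory.mk 0), X))))

/-- The set of `1`-morphisms from `x` to `y` in `Sing_sS(X)` (vertices of the
mapping space). -/
def PathCarrier (X : TopCat) (x y : X) :=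
  { p : EdgeVtx (SingSS X) //
    vsrc (SingSS X) p = pointVtx X x ∧ vtgt (SingSS X) p = pointVtx X y }

/-- Pushing forward a `1`-morphism vertex along a continuous map. -/
def pushEdge {X Y : TopCat} (F : X ⟶ Y) (p : EdgeVtx (SingSS X)) : EdgeVtx (SingSS Y) :=
  ((SingSSmap F).app (op ⦋1⦌)).app (op ⦋0⦌) p

open CategoryTheory Opposite Simplicial SimplexCategory NNReal

noncomputable section
namespace Aux

abbrev TS (n : ℕ) := (SimplexCategory.toTop.{0}.obj ⦋n⦌ : TopCat)

def dn {n : ℕ} (f : TS n) : stdSimplex ℝ (Fin (n+1)) := f.down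

def co {n : ℕ} (f : TS n) : Fin (n+1) → ℝ≥0 :=
  fun i => ⟨(dn f : Fin (n+1) → ℝ) i, (dn f).2.1 i⟩

lemma co_sum {n : ℕ} (f : TS n) : ∑ i, co f i = 1 := by
  apply NNReal.eq
  rw [NNReal.coe_sum]
  exact (dn f).2.2

lemma TS.ext {n : ℕ} {f g : TS n} (h : ∀ i, co f i = co g i) : f = g := by
  apply ULift.ext
  apply Subtype.ext
  funext i
  exact congrArg NNReal.toReal (h i)

def mkTS {n : ℕ} (g : Fin (n+1) → ℝ≥0) (h : ∑ i, g i = 1) : TS n :=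
  ULift.up ⟨fun i => (g i : ℝ), fun i => (g i).2, by rw [← NNReal.coe_sum, h]; rfl⟩

lemma co_mkTS {n : ℕ} (g : Fin (n+1) → ℝ≥0) (h) (i) : co (mkTS g h) i = g i := rfl

lemma continuous_co {n : ℕ} (i : Fin (n+1)) : Continuous (fun f : TS n => co f i) :=
  Continuous.subtype_mk (((continuous_apply i).comp continuous_subtype_val).comp
    continuous_uliftDown) _

lemma continuous_mkTS {Y : Type*} [TopologicalSpace Y] (n : ℕ) (g : Y → Fin (n+1) → ℝ≥0)
    (h : ∀ y, ∑ i, g y i = 1) (hc : ∀ i, Continuous fun y => g y i) :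
    Continuous (fun y => mkTS (g y) (h y)) :=
  continuous_uliftUp.comp
    (Continuous.subtype_mk (continuous_pi fun i => NNReal.continuous_coe.comp (hc i)) _)

/-- evaluation of toTopMap in terms of coordinates -/
lemma co_toTopMap {x y : ℕ} (g : (⦋x⦌ : SimplexCategory) ⟶ ⦋y⦌) (f : TS x) (i : Fin (y+1)) :
    co ((SimplexCategory.toTop.{0}.map g).hom f) i
      = ∑ j, if g.toOrderHom j = i then co f j else 0 := by
  apply NNReal.eq
  rw [NNReal.coe_sum]
  show FunOnFinite.linearMap ℝ ℝ (g.toOrderHom : Fin (x+1) → Fin (y+1))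
    (dn f : Fin (x+1) → ℝ) i = _
  rw [FunOnFinite.linearMap_apply_apply, Finset.sum_filter]
  apply Finset.sum_congr rfl
  intro j _
  split_ifs <;> rfl

instance : Subsingleton (TS 0) := by
  constructor
  intro f g
  apply TS.ext
  intro i
  have hf := co_sum f
  have hg := co_sum g
  rw [Fin.sum_univ_one] at hf hg
  have : i = 0 := by apply Fin.ext; omega
  rw [this, hf, hg]

def z0 : TS 0 := mkTS (fun _ => 1) (by simp)

/-- scalar of a point of I as ℝ≥0 -/
def sc (t : unitInterval) : ℝ≥0 := Real.toNNReal t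

lemma sc_le_one (t : unitInterval) : sc t ≤ 1 := by
  simp [sc, Real.toNNReal_le_one]; exact t.2.2

lemma sc_zero : sc 0 = 0 := by simp [sc]
lemma sc_one : sc 1 = 1 := by simp [sc]

lemma continuous_sc : Continuous sc :=
  continuous_real_toNNReal.comp continuous_subtype_val

/-- The parametrisation I → Δ¹ -/
def iota : C(unitInterval, TS 1) :=
  ⟨fun t => mkTS (fun i => if i = 0 then 1 - sc t else sc t)
      (by rw [Fin.sum_univ_two]; simp [tsub_add_cancel_of_le (sc_le_one t)]),
    by
      apply continuous_mkTS
      intro i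
      by_cases h : i = 0 <;> simp only [h, if_pos, if_true, if_neg, if_false, reduceIte]
      · exact Continuous.sub continuous_const continuous_sc
      · exact continuous_sc⟩

lemma co_le_one {n : ℕ} (f : TS n) (i : Fin (n+1)) : co f i ≤ 1 := by
  rw [← co_sum f]
  exact Finset.single_le_sum (fun j _ => by positivity) (Finset.mem_univ i)

def rho : C(TS 1, unitInterval) :=
  ⟨fun f => ⟨(co f 1 : ℝ), (co f 1).2, by exact_mod_cast co_le_one f 1⟩,
    Continuous.subtype_mk (NNReal.continuous_coe.comp (continuous_co 1)) _⟩

lemma sc_rho (u : TS 1) : sc (rho u) = co u 1 := by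
  simp [sc, rho, Real.toNNReal_coe]

lemma co_iota (t : unitInterval) (i : Fin 2) :
    co (iota t) i = if i = 0 then 1 - sc t else sc t := rfl

lemma iota_rho (u : TS 1) : iota (rho u) = u := by
  apply TS.ext
  intro i
  have hu := co_sum u
  rw [Fin.sum_univ_two] at hu
  rw [co_iota, sc_rho]
  by_cases h : i = 0
  · rw [if_pos h, h]
    have : co u 0 + co u 1 - co u 1 = 1 - co u 1 := by rw [hu]
    rw [← this, add_tsub_cancel_right]
  · rw [if_neg h]
    have h1 : i = 1 := by
      apply Fin.ext
      show i.1 = 1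
      have h2 : i.1 < 2 := i.2
      have h0 : i.1 ≠ 0 := fun hh => h (Fin.ext hh)
      omega
    rw [h1]

lemma rho_iota (t : unitInterval) : rho (iota t) = t := by
  apply Subtype.ext
  have h1 : co (iota t) 1 = sc t := by rw [co_iota, if_neg (by decide)]
  show ((co (iota t) 1 : ℝ≥0) : ℝ) = (t : ℝ)
  rw [h1]
  exact Real.coe_toNNReal _ t.2.1

end Aux

namespace Aux2
open Aux

def vtx {n : ℕ} (k : Fin (n+1)) : TS n :=
  mkTS (fun i => if i = k then 1 else 0) (by rw [Finset.sum_ite_eq' Finset.univ k]; simp)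

lemma co_vtx {n : ℕ} (k i : Fin (n+1)) : co (vtx k) i = if i = k then 1 else 0 := rfl

lemma map_vtx {x y : ℕ} (g : (⦋x⦌ : SimplexCategory) ⟶ ⦋y⦌) (j : Fin (x+1)) :
    (SimplexCategory.toTop.{0}.map g).hom (vtx j) = vtx (g.toOrderHom j) := by
  apply TS.ext
  intro i
  rw [co_toTopMap, co_vtx]
  have h : ∀ j' : Fin (x+1), (if g.toOrderHom j' = i then co (vtx j) j' else 0)
      = if j' = j then (if i = g.toOrderHom j then 1 else 0) else 0 := by
    intro j'
    rw [co_vtx]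
    by_cases h1 : j' = j
    · subst h1
      by_cases h2 : g.toOrderHom j' = i <;> simp [h2, eq_comm] <;> exact fun h => h2 h.symm
    · by_cases h2 : g.toOrderHom j' = i <;> simp [h1, h2]
  refine Eq.trans (Finset.sum_congr rfl fun j' _ => h j') ?_
  show (∑ j' : Fin (x+1), if j' = j then (if i = g.toOrderHom j then 1 else 0) else 0) = _
  rw [Finset.sum_ite_eq' Finset.univ j]
  simp

lemma iota_zero : iota 0 = vtx 0 := by
  apply TS.ext
  intro i
  rw [co_iota, co_vtx, sc_zero]
  by_cases h : i = 0 <;> simp [h]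

lemma iota_one : iota 1 = vtx 1 := by
  apply TS.ext
  intro i
  rw [co_iota, co_vtx, sc_one]
  by_cases h : i = 0
  · subst h; simp
  · have h1 : i = 1 := by
      apply Fin.ext
      show i.1 = 1
      have h2 : i.1 < 2 := i.2
      have h0 : i.1 ≠ 0 := fun hh => h (Fin.ext hh)
      omega
    simp [h, h1]

lemma rho_vtx_zero : rho (vtx 0) = 0 := by
  rw [← iota_zero, rho_iota]

lemma rho_vtx_one : rho (vtx 1) = 1 := by
  rw [← iota_one, rho_iota]

/-- The standard path from `vtx 0` to `vtx 1` in `Δ¹`. -/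
def stdPath : Path (vtx 0 : TS 1) (vtx 1) where
  toFun := iota
  continuous_toFun := iota.continuous
  source' := iota_zero
  target' := iota_one

/-- The contraction of the topological simplex. -/
def contraction (n : ℕ) :
    ContinuousMap.Homotopy (ContinuousMap.id (TS n)) (ContinuousMap.const _ (vtx 0)) where
  toFun q := mkTS (fun i => (1 - sc q.1) * co q.2 i + sc q.1 * co (vtx (0 : Fin (n+1))) i)
    (by
      rw [Finset.sum_add_distrib, ← Finset.mul_sum, ← Finset.mul_sum, co_sum, co_sum,
        mul_one, mul_one, tsub_add_cancel_of_le (sc_le_one q.1)])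
  continuous_toFun := by
    apply continuous_mkTS
    intro i
    have hsc : Continuous fun q : unitInterval × TS n => sc q.1 :=
      continuous_sc.comp continuous_fst
    have hco : Continuous fun q : unitInterval × TS n => co q.2 i :=
      (continuous_co i).comp continuous_snd
    exact ((Continuous.sub continuous_const hsc).mul hco).add (hsc.mul continuous_const)
  map_zero_left f := by
    apply TS.ext
    intro i
    show (1 - sc 0) * co f i + sc 0 * co (vtx 0) i = co f i
    rw [sc_zero]
    simp
  map_one_left f := by
    apply TS.ext
    intro i
    show (1 - sc 1) * co f i + sc 1 * co (vtx 0) i = co (vtx 0) i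
    rw [sc_one]
    simp

instance (n : ℕ) : ContractibleSpace (TS n) :=
  (contractible_iff_id_nullhomotopic _).mpr ⟨vtx 0, ⟨contraction n⟩⟩

example : SimplyConnectedSpace (TS 2) := inferInstance

end Aux2




section Main
open Aux Aux2

attribute [local instance] Path.Homotopic.setoid

variable {X : TopCat}

lemma ulift_hom_inj {A B : TopCat} (a b : ULift.{0} (A ⟶ B)) (h : a.down.hom = b.down.hom) :
    a = b := by
  cases a
  cases b
  congr 1
  exact TopCat.hom_ext h

def unV (v : Vtx (SingSS X)) : C((TS 0 : TopCat), C((TS 0 : TopCat), X)) := v.down.hom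
def unE0 (a : EdgeVtx (SingSS X)) : C((TS 0 : TopCat), C((TS 1 : TopCat), X)) := a.down.hom
def mkE0 (a : C((TS 0 : TopCat), C((TS 1 : TopCat), X))) : EdgeVtx (SingSS X) :=
  ULift.up (TopCat.ofHom a)
def unE1 (a : ((SingSS X).obj (op ⦋1⦌)).obj (op ⦋1⦌)) :
    C((TS 1 : TopCat), C((TS 1 : TopCat), X)) := a.down.hom
def mkE1 (a : C((TS 1 : TopCat), C((TS 1 : TopCat), X))) :
    ((SingSS X).obj (op ⦋1⦌)).obj (op ⦋1⦌) := ULift.up (TopCat.ofHom a)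
def unT (a : ((SingSS X).obj (op ⦋2⦌)).obj (op ⦋0⦌)) :
    C((TS 0 : TopCat), C((TS 2 : TopCat), X)) := a.down.hom
def unS (a : ((SingSS X).obj (op ⦋0⦌)).obj (op ⦋1⦌)) :
    C((TS 1 : TopCat), C((TS 0 : TopCat), X)) := a.down.hom

lemma d1_z0 : (SimplexCategory.toTop.{0}.map (SimplexCategory.δ 1)).hom z0 = (vtx 0 : TS 1) := by
  rw [Subsingleton.elim z0 (vtx 0), map_vtx]
  exact congrArg vtx (by decide)

lemma d0_z0 : (SimplexCategory.toTop.{0}.map (SimplexCategory.δ 0)).hom z0 = (vtx 1 : TS 1) := by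
  rw [Subsingleton.elim z0 (vtx 0), map_vtx]
  exact congrArg vtx (by decide)

/-- The underlying continuous map `Δ¹ → X` of an edge vertex. -/
def ev0 (p : EdgeVtx (SingSS X)) : C((TS 1 : TopCat), X) := unE0 p z0

lemma pc_src {x y : X} (p : PathCarrier X x y) : ev0 p.1 (vtx 0) = x := by
  have h2 := DFunLike.congr_fun (DFunLike.congr_fun (congrArg unV p.2.1) z0) z0
  rw [← d1_z0]
  exact h2

lemma pc_tgt {x y : X} (p : PathCarrier X x y) : ev0 p.1 (vtx 1) = y := by
  have h2 := DFunLike.congr_fun (DFunLike.congr_fun (congrArg unV p.2.2) z0) z0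
  rw [← d0_z0]
  exact h2

/-- The path associated to an edge. -/
def pathOf {x y : X} (p : PathCarrier X x y) : Path x y where
  toFun t := ev0 p.1 (iota t)
  continuous_toFun := (ev0 p.1).continuous.comp iota.continuous
  source' := by show ev0 p.1 (iota 0) = x; rw [iota_zero]; exact pc_src p
  target' := by show ev0 p.1 (iota 1) = y; rw [iota_one]; exact pc_tgt p

lemma pathRel_sound {x y : X} (p q : PathCarrier X x y)
    (h : PathRel (SingSS X) (pointVtx X x) (pointVtx X y) p.1 q.1) :
    (pathOf p).Homotopic (pathOf q) := by
  obtain ⟨E, h1, h2, h3, h4⟩ := h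
  set Ec := unE1 E with hEc
  have hE0 : Ec (vtx 0) = ev0 p.1 := by
    rw [← d1_z0]
    exact DFunLike.congr_fun (congrArg unE0 h1) z0
  have hE1 : Ec (vtx 1) = ev0 q.1 := by
    rw [← d0_z0]
    exact DFunLike.congr_fun (congrArg unE0 h2) z0
  have hsrc : ∀ s : TS 1, Ec s (vtx 0) = x := by
    intro s
    have := DFunLike.congr_fun (DFunLike.congr_fun (congrArg unS h3) s) z0
    rw [← d1_z0]
    exact this
  have htgt : ∀ s : TS 1, Ec s (vtx 1) = y := by
    intro s
    have := DFunLike.congr_fun (DFunLike.congr_fun (congrArg unS h4) s) z0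
    rw [← d0_z0]
    exact this
  have hG : Continuous fun s : unitInterval => (Ec (iota s)).comp iota :=
    (ContinuousMap.continuous_precomp iota).comp (Ec.continuous.comp iota.continuous)
  let G : C(unitInterval, C(unitInterval, X)) := ⟨_, hG⟩
  refine ⟨⟨⟨⟨fun st => Ec (iota st.1) (iota st.2), ?_⟩, ?_, ?_⟩, ?_⟩⟩
  · exact G.uncurry.continuous
  · intro t
    show Ec (iota 0) (iota t) = pathOf p t
    rw [iota_zero, hE0]
    rfl
  · intro t
    show Ec (iota 1) (iota t) = pathOf q t
    rw [iota_one, hE1]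
    rfl
  · intro t s hs
    rcases hs with hs | hs
    · subst hs
      show Ec (iota t) (iota 0) = pathOf p 0
      rw [iota_zero, hsrc, (pathOf p).source]
    · simp only [Set.mem_singleton_iff] at hs
      subst hs
      show Ec (iota t) (iota 1) = pathOf p 1
      rw [iota_one, htgt, (pathOf p).target]

lemma pathRel_exact {x y : X} (p q : PathCarrier X x y)
    (h : (pathOf p).Homotopic (pathOf q)) :
    PathRel (SingSS X) (pointVtx X x) (pointVtx X y) p.1 q.1 := by
  obtain ⟨H⟩ := h
  refine ⟨mkE1 (ContinuousMap.curry (H.toContinuousMap.comp (rho.prodMap rho))), ?_, ?_, ?_, ?_⟩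
  · refine ulift_hom_inj _ _ ?_
    show unE0 _ = unE0 p.1
    apply ContinuousMap.ext
    intro u
    rw [Subsingleton.elim u z0]
    apply ContinuousMap.ext
    intro u'
    show H (rho ((SimplexCategory.toTop.{0}.map (SimplexCategory.δ 1)).hom z0), rho u') = ev0 p.1 u'
    rw [d1_z0, rho_vtx_zero]
    have : H (0, rho u') = pathOf p (rho u') := H.apply_zero (rho u')
    rw [this]
    show ev0 p.1 (iota (rho u')) = ev0 p.1 u'
    rw [iota_rho]
  · refine ulift_hom_inj _ _ ?_
    show unE0 _ = unE0 q.1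
    apply ContinuousMap.ext
    intro u
    rw [Subsingleton.elim u z0]
    apply ContinuousMap.ext
    intro u'
    show H (rho ((SimplexCategory.toTop.{0}.map (SimplexCategory.δ 0)).hom z0), rho u') = ev0 q.1 u'
    rw [d0_z0, rho_vtx_one]
    have : H (1, rho u') = pathOf q (rho u') := H.apply_one (rho u')
    rw [this]
    show ev0 q.1 (iota (rho u')) = ev0 q.1 u'
    rw [iota_rho]
  · refine ulift_hom_inj _ _ ?_
    show unS _ = unS _
    apply ContinuousMap.ext
    intro s
    apply ContinuousMap.ext
    intro u
    rw [Subsingleton.elim u z0]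
    show H (rho s, rho ((SimplexCategory.toTop.{0}.map (SimplexCategory.δ 1)).hom z0)) = x
    rw [d1_z0, rho_vtx_zero]
    exact H.source (rho s)
  · refine ulift_hom_inj _ _ ?_
    show unS _ = unS _
    apply ContinuousMap.ext
    intro s
    apply ContinuousMap.ext
    intro u
    rw [Subsingleton.elim u z0]
    show H (rho s, rho ((SimplexCategory.toTop.{0}.map (SimplexCategory.δ 0)).hom z0)) = y
    rw [d0_z0, rho_vtx_one]
    exact H.target (rho s)

/-- The edge associated to a path. -/
def edgeOf {x y : X} (γ : Path x y) : PathCarrier X x y := by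
  refine ⟨mkE0 (ContinuousMap.const _ (γ.toContinuousMap.comp rho)), ?_, ?_⟩
  · refine ulift_hom_inj _ _ ?_
    show unV _ = unV (pointVtx X x)
    apply ContinuousMap.ext
    intro u
    apply ContinuousMap.ext
    intro u'
    rw [Subsingleton.elim u' z0]
    show γ (rho ((SimplexCategory.toTop.{0}.map (SimplexCategory.δ 1)).hom z0)) = x
    rw [d1_z0, rho_vtx_zero, γ.source]
  · refine ulift_hom_inj _ _ ?_
    show unV _ = unV (pointVtx X y)
    apply ContinuousMap.ext
    intro u
    apply ContinuousMap.ext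
    intro u'
    rw [Subsingleton.elim u' z0]
    show γ (rho ((SimplexCategory.toTop.{0}.map (SimplexCategory.δ 0)).hom z0)) = y
    rw [d0_z0, rho_vtx_one, γ.target]

lemma pathOf_edgeOf {x y : X} (γ : Path x y) : pathOf (edgeOf γ) = γ := by
  ext t
  show γ (rho (iota t)) = γ t
  rw [rho_iota]

/-- Edge paths in the simplex. -/
def vtxPath {n : ℕ} (g : (⦋1⦌ : SimplexCategory) ⟶ ⦋n⦌) (a b : Fin (n+1))
    (ha : g.toOrderHom 0 = a) (hb : g.toOrderHom 1 = b) :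
    Path (vtx a : TS n) (vtx b) where
  toFun t := (SimplexCategory.toTop.{0}.map g).hom (iota t)
  continuous_toFun := ((SimplexCategory.toTop.{0}.map g).hom).continuous.comp iota.continuous
  source' := by
    show (SimplexCategory.toTop.{0}.map g).hom (iota 0) = vtx a
    rw [iota_zero, map_vtx, ha]
  target' := by
    show (SimplexCategory.toTop.{0}.map g).hom (iota 1) = vtx b
    rw [iota_one, map_vtx, hb]

end Main



theorem statement10 :
    ∃ e : ∀ (X : TopCat) (x y : X),
        Quot (fun p q : PathCarrier X x y =>
          PathRel (SingSS X) (pointVtx X x) (pointVtx X y) p.1 q.1) →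
        ((FundamentalGroupoid.mk x : FundamentalGroupoid X) ⟶ FundamentalGroupoid.mk y),
      -- hom-sets: `π₀` of the mapping spaces of `Sing_sS X` is in bijection with
      -- homotopy classes of paths
      (∀ (X : TopCat) (x y : X), Function.Bijective (e X x y)) ∧
      -- objects: the points of `X` are the objects of `h₁(Sing_sS X)`
      (∀ X : TopCat, Function.Bijective (pointVtx X)) ∧
      -- composites are sent to composition of paths in `Π₁(X)`
      (∀ (X : TopCat) (x y z : X) (p : PathCarrier X x y) (q : PathCarrier X y z)
          (r : PathCarrier X x z),
        IsComposite (SingSS X) p.1 q.1 r.1 →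
        e X x z (Quot.mk _ r) = e X x y (Quot.mk _ p) ≫ e X y z (Quot.mk _ q)) ∧
      -- degenerate edges are sent to identities
      (∀ (X : TopCat) (x : X) (w : PathCarrier X x x),
        w.1 = idEdge (SingSS X) (pointVtx X x) →
        e X x x (Quot.mk _ w) = 𝟙 _) ∧
      -- naturality in `X`
      (∀ (X Y : TopCat) (F : X ⟶ Y) (x y : X) (p : PathCarrier X x y)
          (q : PathCarrier Y (F x) (F y)),
        q.1 = pushEdge F p.1 →
        e Y (F x) (F y) (Quot.mk _ q) =
          Path.Homotopic.Quotient.map (e X x y (Quot.mk _ p)) F.hom) := by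
  classical
  refine ⟨fun X x y => Quot.lift
      (fun p => (Path.Homotopic.Quotient.mk (pathOf p) : Path.Homotopic.Quotient x y))
      (fun p q h => Path.Homotopic.Quotient.eq.mpr (pathRel_sound p q h)), ?_, ?_, ?_, ?_, ?_⟩
  · -- bijectivity on hom-sets
    intro X x y
    constructor
    · intro a b
      obtain ⟨p, rfl⟩ := Quot.exists_rep a
      obtain ⟨q, rfl⟩ := Quot.exists_rep b
      intro h
      exact Quot.sound (pathRel_exact p q (Path.Homotopic.Quotient.eq.mp h))
    · intro zz
      obtain ⟨γ, hγ⟩ := Path.Homotopic.Quotient.mk_surjective (zz : Path.Homotopic.Quotient x y)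
      refine ⟨Quot.mk _ (edgeOf γ), ?_⟩
      show Path.Homotopic.Quotient.mk (pathOf (edgeOf γ)) = zz
      rw [pathOf_edgeOf]
      exact hγ
  · -- bijectivity on objects
    intro X
    constructor
    · intro a b h
      exact DFunLike.congr_fun (DFunLike.congr_fun (congrArg unV h) Aux.z0) Aux.z0
    · intro v
      refine ⟨unV v Aux.z0 Aux.z0, ?_⟩
      refine ulift_hom_inj _ _ ?_
      show unV (pointVtx X (unV v Aux.z0 Aux.z0)) = unV v
      apply ContinuousMap.ext
      intro u
      apply ContinuousMap.ext
      intro u'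
      rw [Subsingleton.elim u Aux.z0, Subsingleton.elim u' Aux.z0]
      rfl
  · -- composition
    intro X x y z p q r hcomp
    obtain ⟨σ, h1, h2, h3⟩ := hcomp
    have hp : (unT σ Aux.z0).comp ((SimplexCategory.toTop.{0}.map (SimplexCategory.δ 2)).hom)
        = ev0 p.1 := DFunLike.congr_fun (congrArg unE0 h1) Aux.z0
    have hq : (unT σ Aux.z0).comp ((SimplexCategory.toTop.{0}.map (SimplexCategory.δ 0)).hom)
        = ev0 q.1 := DFunLike.congr_fun (congrArg unE0 h2) Aux.z0
    have hr : (unT σ Aux.z0).comp ((SimplexCategory.toTop.{0}.map (SimplexCategory.δ 1)).hom)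
        = ev0 r.1 := DFunLike.congr_fun (congrArg unE0 h3) Aux.z0
    have hx : unT σ Aux.z0 (Aux2.vtx 0) = x := by
      have h := pc_src p
      rw [← hp] at h
      rw [ContinuousMap.comp_apply, Aux2.map_vtx] at h
      rw [show ((SimplexCategory.δ 2 : (⦋1⦌ : SimplexCategory) ⟶ ⦋2⦌).toOrderHom 0 : Fin 3) = 0
        from by decide] at h
      exact h
    have hy : unT σ Aux.z0 (Aux2.vtx 1) = y := by
      have h := pc_src q
      rw [← hq] at h
      rw [ContinuousMap.comp_apply, Aux2.map_vtx] at h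
      rw [show ((SimplexCategory.δ 0 : (⦋1⦌ : SimplexCategory) ⟶ ⦋2⦌).toOrderHom 0 : Fin 3) = 1
        from by decide] at h
      exact h
    have hz : unT σ Aux.z0 (Aux2.vtx 2) = z := by
      have h := pc_tgt q
      rw [← hq] at h
      rw [ContinuousMap.comp_apply, Aux2.map_vtx] at h
      rw [show ((SimplexCategory.δ 0 : (⦋1⦌ : SimplexCategory) ⟶ ⦋2⦌).toOrderHom 1 : Fin 3) = 2
        from by decide] at h
      exact h
    subst hx hy hz
    show Path.Homotopic.Quotient.mk (pathOf r) = Path.Homotopic.Quotient.trans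
      (Path.Homotopic.Quotient.mk (pathOf p)) (Path.Homotopic.Quotient.mk (pathOf q))
    rw [← Path.Homotopic.Quotient.mk_trans]
    have hP : pathOf r = (vtxPath (SimplexCategory.δ 1) 0 2 (by decide) (by decide)).map
        (unT σ Aux.z0).continuous := by
      ext t
      show ev0 r.1 (Aux.iota t) = unT σ Aux.z0 ((SimplexCategory.toTop.{0}.map (SimplexCategory.δ 1)).hom (Aux.iota t))
      rw [← hr]
      rfl
    have hPp : pathOf p = (vtxPath (SimplexCategory.δ 2) 0 1 (by decide) (by decide)).map
        (unT σ Aux.z0).continuous := by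
      ext t
      show ev0 p.1 (Aux.iota t) = unT σ Aux.z0 ((SimplexCategory.toTop.{0}.map (SimplexCategory.δ 2)).hom (Aux.iota t))
      rw [← hp]
      rfl
    have hPq : pathOf q = (vtxPath (SimplexCategory.δ 0) 1 2 (by decide) (by decide)).map
        (unT σ Aux.z0).continuous := by
      ext t
      show ev0 q.1 (Aux.iota t) = unT σ Aux.z0 ((SimplexCategory.toTop.{0}.map (SimplexCategory.δ 0)).hom (Aux.iota t))
      rw [← hq]
      rfl
    refine Path.Homotopic.Quotient.eq.mpr ?_
    rw [hP, hPp, hPq, ← Path.map_trans]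
    exact Path.Homotopic.map (SimplyConnectedSpace.paths_homotopic _ _) (unT σ Aux.z0)
  · -- identities
    intro X x w hw
    show Path.Homotopic.Quotient.mk (pathOf w) = 𝟙 (FundamentalGroupoid.mk x)
    have h : pathOf w = Path.refl x := by
      ext t
      show ev0 w.1 (Aux.iota t) = x
      rw [hw]
      rfl
    rw [h]
    rfl
  · -- naturality
    intro X Y F x y p q hq
    show Path.Homotopic.Quotient.mk (pathOf q)
      = Path.Homotopic.Quotient.map (Path.Homotopic.Quotient.mk (pathOf p)) F.hom
    have h : pathOf q = (pathOf p).map F.hom.continuous := by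
      ext t
      show ev0 q.1 (Aux.iota t) = F (ev0 p.1 (Aux.iota t))
      rw [hq]
      rfl
    rw [h]
    rfl


end
end
end

section
/- Define R_n : Δ_t[n] → Sp_t(n) ⊆ Δ_t[n] on barycentric coordinates by R_n(x_0,...,x_n) = ((i+1) − Σ_j j·x_j)·e_i + (Σ_j j·x_j − i)·e_{i+1} whenever i ≤ Σ_j j·x_j ≤ i+1. Then R_n is a continuous retraction of the topological spine Sp_t(n) = ⋃_{i=0}^{n-1} [e_i, e_{i+1}] ⊆ Δ_t[n]: R_n restricted to Sp_t(n) is the identity. In particular, on a point (1−t)e_i + t·e_{i+1} of the spine, Σ_j j·x_j = i + t and R_n((1−t)e_i + t·e_{i+1}) = (1−t)e_i + t·e_{i+1}. -/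
/-!
STATEMENT 19: The map `R_n : Δ_t[n] → Sp_t(n)` given on barycentric coordinates by
`R_n(x) = ((i+1) − Σ_j j·x_j)·e_i + (Σ_j j·x_j − i)·e_{i+1}` for `i ≤ Σ_j j·x_j ≤ i+1`
is a well-defined continuous retraction of the topological spine
`Sp_t(n) = ⋃ [e_i, e_{i+1}] ⊆ Δ_t[n]`: it restricts to the identity on the spine,
its image lies in the spine, and on a spine point `(1−t)e_i + t·e_{i+1}` one has
`Σ_j j·x_j = i + t` and `R_n` fixes the point.
-/

open Finset

/-- The topological `n`-simplex `Δ_t[n] ⊆ ℝ^{n+1}`. -/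
def TopSimplex (n : ℕ) : Type :=
  {x : Fin (n + 1) → ℝ // (∀ i, 0 ≤ x i) ∧ ∑ i, x i = 1}

instance (n : ℕ) : TopologicalSpace (TopSimplex n) := by
  unfold TopSimplex; infer_instance

/-- The `i`-th vertex `e_i` of the topological simplex. -/
def vertex (n : ℕ) (i : Fin (n + 1)) : TopSimplex n :=
  ⟨fun j => if j = i then 1 else 0, by
    constructor
    · intro j; dsimp only; split <;> norm_num
    · simp⟩

/-- The weighted sum `Σ_j j·x_j` of a point of the simplex. -/
def wsum {n : ℕ} (x : TopSimplex n) : ℝ :=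
  ∑ j, (j.1 : ℝ) * x.1 j

/-- Membership in the topological spine `Sp_t(n) = ⋃_{i=0}^{n-1} [e_i, e_{i+1}]`. -/
def InSpine {n : ℕ} (p : TopSimplex n) : Prop :=
  ∃ (i : Fin n) (t : ℝ), 0 ≤ t ∧ t ≤ 1 ∧
    p.1 = (1 - t) • (vertex n i.castSucc).1 + t • (vertex n i.succ).1

/-- The tent function: `tent n s j = max 0 (1 - |s - j|)`. -/
def tent (n : ℕ) (s : ℝ) : Fin (n + 1) → ℝ := fun j => max 0 (1 - |s - (j.1 : ℝ)|)

lemma tent_eq (n : ℕ) (s : ℝ) (i : Fin n) (h1 : (i.1 : ℝ) ≤ s) (h2 : s ≤ i.1 + 1) :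
    tent n s = ((i.1 + 1 : ℝ) - s) • (vertex n i.castSucc).1 +
      (s - (i.1 : ℝ)) • (vertex n i.succ).1 := by
  funext j
  simp only [tent, vertex, Pi.add_apply, Pi.smul_apply, smul_eq_mul]
  rcases eq_or_ne j i.castSucc with rfl | hA
  · have hne : i.castSucc ≠ i.succ := (Fin.castSucc_lt_succ).ne
    rw [if_pos rfl, if_neg hne]
    have : |s - (i.castSucc.1 : ℝ)| = s - i.1 := by
      rw [Fin.coe_castSucc, abs_of_nonneg (by linarith)]
    rw [this, max_eq_right (by linarith)]
    ring
  · rcases eq_or_ne j i.succ with rfl | hB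
    · rw [if_neg hA, if_pos rfl]
      have : |s - (i.succ.1 : ℝ)| = (i.1 : ℝ) + 1 - s := by
        rw [Fin.val_succ]; push_cast
        rw [abs_of_nonpos (by linarith)]; ring
      rw [this, max_eq_right (by linarith)]
      ring
    · rw [if_neg hA, if_neg hB, mul_zero, mul_zero, add_zero]
      have hj1 : j.1 ≠ i.1 := fun h => hA (Fin.ext (by simp [h]))
      have hj2 : j.1 ≠ i.1 + 1 := fun h => hB (Fin.ext (by simp [h, Fin.val_succ]))
      have habs : 1 ≤ |s - (j.1 : ℝ)| := by
        rcases (by omega : j.1 < i.1 ∨ i.1 + 1 < j.1) with h | h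
        · have : (j.1 : ℝ) + 1 ≤ (i.1 : ℝ) := by exact_mod_cast h
          calc (1 : ℝ) ≤ s - j.1 := by linarith
            _ ≤ |s - j.1| := le_abs_self _
        · have : (i.1 : ℝ) + 1 + 1 ≤ (j.1 : ℝ) := by exact_mod_cast h
          calc (1 : ℝ) ≤ (j.1 : ℝ) - s := by linarith
            _ = -(s - j.1) := by ring
            _ ≤ |s - j.1| := neg_le_abs _
      exact max_eq_left (by linarith)

lemma exists_seg (n : ℕ) (hn : 0 < n) (s : ℝ) (h0 : 0 ≤ s) (hns : s ≤ n) :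
    ∃ i : Fin n, (i.1 : ℝ) ≤ s ∧ s ≤ i.1 + 1 := by
  rcases le_or_gt (⌊s⌋₊ + 1) n with h | h
  · refine ⟨⟨⌊s⌋₊, by omega⟩, Nat.floor_le h0, ?_⟩
    exact_mod_cast (Nat.lt_floor_add_one s).le
  · refine ⟨⟨n - 1, by omega⟩, ?_, ?_⟩
    · have h' : (n : ℝ) ≤ ⌊s⌋₊ + 1 := by exact_mod_cast h.le
      have := Nat.floor_le h0
      push_cast [Nat.cast_sub hn]
      linarith
    · push_cast [Nat.cast_sub hn]
      linarith

lemma tent_mem (n : ℕ) (hn : 0 < n) (s : ℝ) (h0 : 0 ≤ s) (hns : s ≤ n) :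
    (∀ j, 0 ≤ tent n s j) ∧ ∑ j, tent n s j = 1 := by
  obtain ⟨i, hi1, hi2⟩ := exists_seg n hn s h0 hns
  rw [tent_eq n s i hi1 hi2]
  constructor
  · intro j
    simp only [Pi.add_apply, Pi.smul_apply, smul_eq_mul]
    have := (vertex n i.castSucc).2.1 j
    have := (vertex n i.succ).2.1 j
    nlinarith
  · simp only [Pi.add_apply, Pi.smul_apply, smul_eq_mul, Finset.sum_add_distrib,
      ← Finset.mul_sum, (vertex n i.castSucc).2.2, (vertex n i.succ).2.2]
    ring

lemma wsum_bounds {n : ℕ} (x : TopSimplex n) : 0 ≤ wsum x ∧ wsum x ≤ n := by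
  constructor
  · exact Finset.sum_nonneg fun j _ => mul_nonneg (by positivity) (x.2.1 j)
  · calc wsum x ≤ ∑ j, (n : ℝ) * x.1 j := by
          apply Finset.sum_le_sum
          intro j _
          exact mul_le_mul_of_nonneg_right (by exact_mod_cast Nat.lt_succ_iff.mp j.2) (x.2.1 j)
    _ = n := by rw [← Finset.mul_sum, x.2.2, mul_one]

lemma wsum_cont (n : ℕ) : Continuous (fun x : TopSimplex n => wsum x) := by
  unfold wsum
  exact continuous_finset_sum _ fun j _ =>
    (continuous_const.mul ((continuous_apply j).comp continuous_subtype_val))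

lemma wsum_spine {n : ℕ} (i : Fin n) (t : ℝ) (p : TopSimplex n)
    (hp : p.1 = (1 - t) • (vertex n i.castSucc).1 + t • (vertex n i.succ).1) :
    wsum p = (i.1 : ℝ) + t := by
  unfold wsum
  rw [hp]
  simp only [vertex, Pi.add_apply, Pi.smul_apply, smul_eq_mul, mul_ite, mul_one, mul_zero,
    mul_add, Finset.sum_add_distrib, Finset.sum_ite_eq', Finset.mem_univ, if_true]
  rw [Fin.coe_castSucc, Fin.val_succ]
  push_cast
  ring

theorem statement19 (n : ℕ) (hn : 0 < n) :
    ∃ R : C(TopSimplex n, TopSimplex n),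
      -- the defining formula of `R_n` on each piece `i ≤ Σ_j j·x_j ≤ i+1`
      (∀ (x : TopSimplex n) (i : Fin n),
          (i.1 : ℝ) ≤ wsum x → wsum x ≤ i.1 + 1 →
          (R x).1 = ((i.1 + 1 : ℝ) - wsum x) • (vertex n i.castSucc).1 +
              (wsum x - (i.1 : ℝ)) • (vertex n i.succ).1) ∧
      -- `R_n` lands in the spine
      (∀ x : TopSimplex n, InSpine (R x)) ∧
      -- `R_n` restricts to the identity on the spine
      (∀ p : TopSimplex n, InSpine p → R p = p) ∧
      -- in particular, on the point `(1−t)·e_i + t·e_{i+1}` of the spine we have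
      -- `Σ_j j·x_j = i + t` and `R_n` fixes it
      (∀ (i : Fin n) (t : ℝ), 0 ≤ t → t ≤ 1 →
          ∀ p : TopSimplex n,
            p.1 = (1 - t) • (vertex n i.castSucc).1 + t • (vertex n i.succ).1 →
            wsum p = (i.1 : ℝ) + t ∧ R p = p) := by
  refine ⟨⟨fun x => ⟨tent n (wsum x),
      tent_mem n hn _ (wsum_bounds x).1 (wsum_bounds x).2⟩, ?_⟩, ?_⟩
  · apply Continuous.subtype_mk
    apply continuous_pi
    intro j
    exact continuous_const.max
      (continuous_const.sub ((wsum_cont n).sub continuous_const).abs)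
  · have hform : ∀ (x : TopSimplex n) (i : Fin n),
        (i.1 : ℝ) ≤ wsum x → wsum x ≤ i.1 + 1 →
        tent n (wsum x) = ((i.1 + 1 : ℝ) - wsum x) • (vertex n i.castSucc).1 +
            (wsum x - (i.1 : ℝ)) • (vertex n i.succ).1 :=
      fun x i h1 h2 => tent_eq n (wsum x) i h1 h2
    have hid : ∀ p : TopSimplex n, InSpine p →
        (⟨tent n (wsum p), tent_mem n hn _ (wsum_bounds p).1 (wsum_bounds p).2⟩ :
          TopSimplex n) = p := by
      rintro p ⟨i, t, ht0, ht1, hp⟩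
      have hw : wsum p = (i.1 : ℝ) + t := wsum_spine i t p hp
      apply Subtype.ext
      show tent n (wsum p) = p.1
      rw [tent_eq n (wsum p) i (by rw [hw]; linarith) (by rw [hw]; linarith), hw]
      have e1 : (i.1 + 1 : ℝ) - ((i.1 : ℝ) + t) = 1 - t := by ring
      have e2 : (i.1 : ℝ) + t - (i.1 : ℝ) = t := by ring
      rw [e1, e2, ← hp]
    refine ⟨hform, ?_, hid, ?_⟩
    · intro x
      obtain ⟨i, hi1, hi2⟩ := exists_seg n hn (wsum x) (wsum_bounds x).1 (wsum_bounds x).2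
      refine ⟨i, wsum x - i.1, by linarith, by linarith, ?_⟩
      show tent n (wsum x) = _
      rw [tent_eq n (wsum x) i hi1 hi2]
      have e1 : (i.1 + 1 : ℝ) - wsum x = 1 - (wsum x - i.1) := by ring
      rw [e1]
    · intro i t ht0 ht1 p hp
      exact ⟨wsum_spine i t p hp, hid p ⟨i, t, ht0, ht1, hp⟩⟩
end
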